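/- For a, b > 0 with a + b ≤ 1, the quantity S(2) = 4 - ((a+b+2ab)/(a+b))·B(a,b) is strictly negative, where B(a,b) = Γ(a)Γ(b)/Γ(a+b). -/

import Mathlib

open Real

lemma sqrtpi_lb : 1.772 ≤ Real.sqrt π := by
  rw [show (1.772:ℝ) = Real.sqrt (1.772^2) by rw [Real.sqrt_sq (by norm_num)]]
  exact Real.sqrt_le_sqrt (by nlinarith [Real.pi_gt_d6])

lemma sqrtpi_ub : Real.sqrt π ≤ 1.7725 := by
  rw [show (1.7725:ℝ) = Real.sqrt (1.7725^2) by rw [Real.sqrt_sq (by norm_num)]]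
  exact Real.sqrt_le_sqrt (by nlinarith [Real.pi_lt_d6])

-- Gamma(1+s) ≤ 1 for 0 ≤ s ≤ 1
lemma gamma_le_one {s : ℝ} (h0 : 0 ≤ s) (h1 : s ≤ 1) : Real.Gamma (s + 1) ≤ 1 := by
  have hc := Real.convexOn_log_Gamma
  have key := hc.2 (show (1:ℝ) ∈ Set.Ioi 0 by norm_num) (show (2:ℝ) ∈ Set.Ioi 0 by norm_num)
    (show 0 ≤ 1 - s by linarith) h0 (by ring)
  rw [show ((1:ℝ)-s) • (1:ℝ) + s • (2:ℝ) = s + 1 by simp [smul_eq_mul]; ring] at key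
  simp only [Function.comp, smul_eq_mul, Real.Gamma_one, Real.Gamma_two, Real.log_one,
    mul_zero, add_zero] at key
  have hpos : 0 < Real.Gamma (s + 1) := Real.Gamma_pos_of_pos (by linarith)
  calc Real.Gamma (s + 1) = Real.exp (Real.log (Real.Gamma (s+1))) := (Real.exp_log hpos).symm
    _ ≤ Real.exp 0 := Real.exp_le_exp.mpr key
    _ = 1 := Real.exp_zero

-- midpoint: Γ(a+1)Γ(b+1) ≥ Γ((a+b)/2+1)^2
lemma gamma_mid {a b : ℝ} (ha : 0 < a) (hb : 0 < b) :
    Real.Gamma ((a + b) / 2 + 1) ^ 2 ≤ Real.Gamma (a + 1) * Real.Gamma (b + 1) := by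
  have hc := Real.convexOn_log_Gamma
  have key := hc.2 (show a + 1 ∈ Set.Ioi 0 by simp; linarith)
    (show b + 1 ∈ Set.Ioi 0 by simp; linarith)
    (show (0:ℝ) ≤ 1/2 by norm_num) (show (0:ℝ) ≤ 1/2 by norm_num) (by norm_num)
  rw [show (1/2:ℝ) • (a + 1) + (1/2:ℝ) • (b + 1) = (a+b)/2 + 1 by simp [smul_eq_mul]; ring] at key
  simp only [Function.comp, smul_eq_mul] at key
  have h1 : 0 < Real.Gamma (a + 1) := Real.Gamma_pos_of_pos (by linarith)
  have h2 : 0 < Real.Gamma (b + 1) := Real.Gamma_pos_of_pos (by linarith)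
  have h3 : 0 < Real.Gamma ((a + b)/2 + 1) := Real.Gamma_pos_of_pos (by linarith)
  have hlog : Real.log (Real.Gamma ((a+b)/2+1) ^ 2)
      ≤ Real.log (Real.Gamma (a+1) * Real.Gamma (b+1)) := by
    rw [Real.log_pow, Real.log_mul h1.ne' h2.ne']
    push_cast; linarith
  exact (Real.log_le_log_iff (by positivity) (by positivity)).mp hlog

-- secant bound: for 0 ≤ u ≤ 1/2, Γ(u+1) ≥ √π(1-u) - 1 + 2u
lemma gamma_secant {u : ℝ} (h0 : 0 ≤ u) (h1 : u ≤ 1/2) :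
    Real.sqrt π * (1 - u) - 1 + 2 * u ≤ Real.Gamma (u + 1) := by
  have hc := Real.convexOn_Gamma
  have hu1 : (0:ℝ) < 1 - u := by linarith
  have hne : (1:ℝ) - u ≠ 0 := hu1.ne'
  have hlam : (0:ℝ) ≤ 1 / (2 * (1 - u)) := div_nonneg zero_le_one (by linarith)
  have hmu : (0:ℝ) ≤ (1 - 2*u) / (2 * (1 - u)) := div_nonneg (by linarith) (by linarith)
  have hsum : 1 / (2 * (1 - u)) + (1 - 2*u) / (2 * (1 - u)) = 1 := by
    rw [← add_div, div_eq_one_iff_eq (by positivity)]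
    ring
  have key := hc.2 (show u + 1 ∈ Set.Ioi 0 by simp; linarith)
    (show (2:ℝ) ∈ Set.Ioi 0 by norm_num) hlam hmu hsum
  simp only [smul_eq_mul] at key
  rw [show 1 / (2 * (1 - u)) * (u + 1) + (1 - 2*u) / (2 * (1 - u)) * 2 = 3/2 by
    field_simp; ring] at key
  have hg32 : Real.Gamma (3/2 : ℝ) = Real.sqrt π / 2 := by
    rw [show (3/2:ℝ) = 1/2 + 1 by norm_num, Real.Gamma_add_one (by norm_num),
      Real.Gamma_one_half_eq]
    ring
  rw [hg32, Real.Gamma_two] at key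
  rw [div_mul_eq_mul_div, div_mul_eq_mul_div, ← add_div,
    le_div_iff₀ (by positivity)] at key
  nlinarith [key]

set_option maxHeartbeats 1600000 in
theorem stmt_4 (a b : ℝ) (ha : 0 < a) (hb : 0 < b) (hab : a + b ≤ 1) :
    4 - ((a + b + 2 * a * b) / (a + b)) *
      (Real.Gamma a * Real.Gamma b / Real.Gamma (a + b)) < 0 := by
  have hs : 0 < a + b := by linarith
  have hGa : 0 < Real.Gamma a := Real.Gamma_pos_of_pos ha
  have hGb : 0 < Real.Gamma b := Real.Gamma_pos_of_pos hb
  have hGs : 0 < Real.Gamma (a + b) := Real.Gamma_pos_of_pos hs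
  have hGm : 0 < Real.Gamma ((a + b)/2 + 1) := Real.Gamma_pos_of_pos (by positivity)
  have ea : Real.Gamma (a + 1) = a * Real.Gamma a := Real.Gamma_add_one ha.ne'
  have eb : Real.Gamma (b + 1) = b * Real.Gamma b := Real.Gamma_add_one hb.ne'
  have es : Real.Gamma (a + b + 1) = (a + b) * Real.Gamma (a + b) := Real.Gamma_add_one hs.ne'
  have hG1 : Real.Gamma (a + b + 1) ≤ 1 := gamma_le_one hs.le hab
  have hmid := gamma_mid ha hb
  have hsec := gamma_secant (by positivity : (0:ℝ) ≤ (a+b)/2) (by linarith)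
  have hq1 : (1.772:ℝ) ≤ Real.sqrt π := sqrtpi_lb
  have hq2 : Real.sqrt π ≤ 1.7725 := sqrtpi_ub
  -- linear lower bound for Γ((a+b)/2+1)
  have hlin : 0.772 + 0.113 * (a + b) ≤ Real.Gamma ((a + b)/2 + 1) := by nlinarith [hsec]
  -- polynomial inequality
  have hp : a * b ≤ (a + b)^2 / 4 := by nlinarith [sq_nonneg (a - b)]
  have hfin : 0 < (0.772 + 0.113*(a+b))^2 * (1 + (a+b)/2) - (a + b) := by
    nlinarith [sq_nonneg (a+b), mul_nonneg (mul_nonneg hs.le hs.le) hs.le]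
  have hA : 0 ≤ ((a+b)^2/4 - a*b) * (2 - (0.772 + 0.113*(a+b))^2) := by
    apply mul_nonneg (by linarith)
    nlinarith
  have key2 : 4 * (a * b) < (a + b + 2 * (a * b)) * (0.772 + 0.113*(a+b))^2 := by
    nlinarith [hA, mul_pos hs (hfin)]
  -- upgrade to Γ
  have hsq : (0.772 + 0.113*(a+b))^2 ≤ Real.Gamma ((a + b)/2 + 1)^2 :=
    pow_le_pow_left₀ (by nlinarith) hlin 2
  have hmidL : (0.772 + 0.113*(a+b))^2 ≤ Real.Gamma (a + 1) * Real.Gamma (b + 1) := by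
    linarith [hmid, hsq]
  have main : 4 * (a * b) * Real.Gamma (a + b + 1) < (a + b + 2 * (a * b)) *
      (Real.Gamma (a + 1) * Real.Gamma (b + 1)) := by
    have h4 : 4 * (a * b) * Real.Gamma (a + b + 1) ≤ 4 * (a * b) := by
      nlinarith [mul_pos ha hb]
    have h5 : (a + b + 2 * (a * b)) * (0.772 + 0.113*(a+b))^2 ≤ (a + b + 2 * (a * b)) *
        (Real.Gamma (a + 1) * Real.Gamma (b + 1)) := by
      apply mul_le_mul_of_nonneg_left hmidL
      nlinarith [mul_pos ha hb]
    linarith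
  rw [ea, eb, es] at main
  rw [sub_neg, div_mul_div_comm, lt_div_iff₀ (by positivity)]
  nlinarith [main, mul_pos ha hb, mul_pos hGa hGb,
    mul_pos (mul_pos hs hGs) (mul_pos ha hb)]
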